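/- Let μ ∈ (0,1], p > 1 and k ∈ ℕ. There exists a constant γ = γ(p) > 0 such that for all ξ, ξ̃ ∈ ℝᵏ one has | (μ² + |ξ|²)^{(p−2)/2} ξ − (μ² + |ξ̃|²)^{(p−2)/2} ξ̃ | ≤ γ (μ² + |ξ|² + |ξ̃|²)^{(p−2)/2} |ξ − ξ̃|, where |·| denotes the Euclidean norm on ℝᵏ. -/
import Mathlib

set_option maxHeartbeats 1000000

open Real

lemma mub_q1 {μ x y d : ℝ} (hy : 0 ≤ y) (hyx : y ≤ x) (hd0 : 0 ≤ d) (hd : x - y ≤ d) :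
    ((μ^2+x^2) - (μ^2+y^2)) * y ≤ 2*(μ^2+x^2)*d := by
  have hx : 0 ≤ x := hy.trans hyx
  nlinarith [mul_le_mul_of_nonneg_right hd (mul_nonneg (by linarith : (0:ℝ) ≤ x+y) hy),
    mul_le_mul_of_nonneg_right hyx hy, mul_le_mul_of_nonneg_left hyx hx,
    mul_nonneg hd0 (sq_nonneg x), mul_nonneg hd0 (sq_nonneg μ)]

lemma mub_q2 {μ x y d : ℝ} (hy : 0 ≤ y) (hyx : y ≤ x) (hd0 : 0 ≤ d) (hd : x - y ≤ d)
    (h4B : μ^2+x^2 ≤ 4*(μ^2+y^2)) :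
    ((μ^2+x^2) - (μ^2+y^2)) * y ≤ 3*(μ^2+y^2)*d := by
  have hx : 0 ≤ x := hy.trans hyx
  have hxy3B : (x+y)*y ≤ 3*(μ^2+y^2) := by nlinarith [sq_nonneg (x - 2*y)]
  nlinarith [mul_le_mul_of_nonneg_right hd (mul_nonneg (by linarith : (0:ℝ) ≤ x+y) hy),
    mul_le_mul_of_nonneg_left hxy3B hd0,
    mul_le_mul_of_nonneg_right hyx hy, mul_le_mul_of_nonneg_left hyx hx]

lemma mub_q3 {μ x y d : ℝ} (hy : 0 ≤ y) (hyx : y ≤ x) (hd0 : 0 ≤ d) (hd : x - y ≤ d)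
    (hy3 : 3*y^2 ≤ x^2) (hμ3 : 3*μ^2 ≤ x^2) :
    μ^2+x^2+y^2 ≤ 16*d^2 := by
  have hdxy : (x-y)^2 ≤ d^2 := by nlinarith
  nlinarith [sq_nonneg (13*x - 24*y), hdxy]

-- Bernoulli consequence, exponent ≥ 1
lemma mub_bern1 {a b q : ℝ} (hb : 0 ≤ b) (hba : b ≤ a) (ha : 0 < a) (hq : 1 ≤ q) :
    a ^ q - b ^ q ≤ q * a ^ (q - 1) * (a - b) := by
  have hA : (0:ℝ) < a ^ q := rpow_pos_of_pos ha q
  have hs : -1 ≤ b / a - 1 := by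
    have : 0 ≤ b / a := div_nonneg hb ha.le
    linarith
  have h1 : 1 + q * (b / a - 1) ≤ (1 + (b / a - 1)) ^ q :=
    one_add_mul_self_le_rpow_one_add hs hq
  have h2 : (1 + (b / a - 1)) ^ q = b ^ q / a ^ q := by
    rw [show 1 + (b / a - 1) = b / a by ring, div_rpow hb ha.le]
  rw [h2] at h1
  have h3 : a ^ (q - 1) = a ^ q / a := rpow_sub_one ha.ne' q
  have h4 : (1 + q * (b / a - 1)) * a ^ q ≤ b ^ q := by
    have := mul_le_mul_of_nonneg_right h1 hA.le
    rwa [div_mul_cancel₀ _ hA.ne'] at this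
  have h5 : (a + q * (b - a)) * a ^ q ≤ b ^ q * a := by
    have h := mul_le_mul_of_nonneg_right h4 ha.le
    rw [show (1 + q * (b / a - 1)) * a ^ q * a = (a + q * (b - a)) * a ^ q by
      field_simp] at h
    exact h
  rw [h3, show q * (a ^ q / a) * (a - b) = q * a ^ q * (a - b) / a by ring,
    le_div_iff₀ ha]
  nlinarith [h5]

-- exponent in (0,1]
lemma mub_bern2 {a b q : ℝ} (hb : 0 < b) (hba : b ≤ a) (hq0 : 0 < q) (hq1 : q ≤ 1) :
    a ^ q - b ^ q ≤ a ^ (q - 1) * (a - b) := by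
  have ha : 0 < a := hb.trans_le hba
  have h1 : a ^ (q - 1) ≤ b ^ (q - 1) :=
    rpow_le_rpow_of_nonpos hb hba (by linarith)
  have h2 : b ^ (q - 1) * b = b ^ q := by
    rw [rpow_sub_one hb.ne', div_mul_cancel₀ _ hb.ne']
  have h3 : a ^ (q - 1) * a = a ^ q := by
    rw [rpow_sub_one ha.ne', div_mul_cancel₀ _ ha.ne']
  nlinarith [mul_le_mul_of_nonneg_right h1 hb.le]

-- exponent in [-1, 0)
lemma mub_bern3 {a b q : ℝ} (hb : 0 < b) (hba : b ≤ a) (hq0 : -1 ≤ q) (hq1 : q < 0) :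
    b ^ q - a ^ q ≤ (-q) * b ^ (q - 1) * (a - b) := by
  have ha : 0 < a := hb.trans_le hba
  set r := -q with hr
  have hr0 : 0 < r := by simp [hr]; linarith
  have hr1 : r ≤ 1 := by simp [hr]; linarith
  set u := a / b with hu
  have hu1 : 1 ≤ u := (one_le_div hb).2 hba
  have hs : -1 ≤ u - 1 := by linarith
  have h1 : (1 + (u - 1)) ^ r ≤ 1 + r * (u - 1) :=
    rpow_one_add_le_one_add_mul_self hs hr0.le hr1
  rw [show 1 + (u - 1) = u by ring] at h1
  have hur : 1 ≤ u ^ r := one_le_rpow hu1 hr0.le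
  -- u ^ q = (u ^ r)⁻¹
  have huq : u ^ q = (u ^ r)⁻¹ := by
    rw [show q = -r by simp [hr], rpow_neg (by positivity)]
  -- A ^ q = u ^ q * b ^ q
  have hA : a ^ q = u ^ q * b ^ q := by
    rw [hu, div_rpow ha.le hb.le, div_mul_cancel₀]
    exact (rpow_pos_of_pos hb q).ne'
  have hBq : (0:ℝ) < b ^ q := rpow_pos_of_pos hb q
  have key : 1 - u ^ q ≤ r * (u - 1) := by
    rw [huq]
    have hv : (0:ℝ) < u ^ r := rpow_pos_of_pos (by positivity) r
    have h6 : 1 - (u ^ r)⁻¹ ≤ u ^ r - 1 := by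
      nlinarith [mul_inv_cancel₀ hv.ne', sq_nonneg (u ^ r - 1), hv,
        inv_pos.2 hv]
    nlinarith [h1, h6]
  have h2 : b ^ (q - 1) * b = b ^ q := by
    rw [rpow_sub_one hb.ne', div_mul_cancel₀ _ hb.ne']
  have hub : u * b = a := div_mul_cancel₀ _ hb.ne'
  calc b ^ q - a ^ q = b ^ q * (1 - u ^ q) := by rw [hA]; ring
    _ ≤ b ^ q * (r * (u - 1)) := by
        exact mul_le_mul_of_nonneg_left key hBq.le
    _ = (-q) * b ^ (q - 1) * (a - b) := by
        rw [← hub, ← h2]; ring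

lemma mub_q4 {μ x y d c : ℝ} (hy : 0 ≤ y) (hyx : y ≤ x) (hd0 : 0 ≤ d)
    (hd : x - y ≤ d) (hc : 0 < c) (hc2 : c^2 = μ^2+y^2) (h4B : 4*(μ^2+y^2) < μ^2+x^2) :
    y ≤ c ∧ c ≤ 2*d ∧ μ^2+x^2+y^2 ≤ 16*d^2 := by
  have hx : 0 ≤ x := hy.trans hyx
  have hyc : y ≤ c := by nlinarith
  have hx3 : 3*c^2 ≤ x^2 := by nlinarith
  have hxc : (3/2)*c ≤ x := by nlinarith [sq_nonneg (x - (3/2)*c)]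
  have hcd : c ≤ 2*d := by linarith
  refine ⟨hyc, hcd, ?_⟩
  exact mub_q3 hy hyx hd0 hd (by nlinarith) (by nlinarith)

lemma mub_scalar {p μ x y d : ℝ} (hp : 1 < p) (hμ : 0 < μ) (hy : 0 ≤ y) (hyx : y ≤ x)
    (hd0 : 0 ≤ d) (hd : x - y ≤ d) :
    (μ^2 + x^2) ^ ((p-2)/2) * d + |(μ^2 + x^2) ^ ((p-2)/2) - (μ^2 + y^2) ^ ((p-2)/2)| * y
      ≤ (p+9) * (μ^2 + x^2 + y^2) ^ ((p-2)/2) * d := by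
  have hx : 0 ≤ x := hy.trans hyx
  set t := (p-2)/2 with ht
  set A := μ^2 + x^2 with hAdef
  set B := μ^2 + y^2 with hBdef
  set S := μ^2 + x^2 + y^2 with hSdef
  have hA : 0 < A := by positivity
  have hB : 0 < B := by positivity
  have hS : 0 < S := by positivity
  have hBA : B ≤ A := by rw [hAdef, hBdef]; nlinarith
  have hAS : A ≤ S := by rw [hAdef, hSdef]; nlinarith
  have hS2A : S ≤ 2*A := by rw [hAdef, hSdef]; nlinarith
  have hAt : 0 < A ^ t := rpow_pos_of_pos hA t
  have hBt : 0 < B ^ t := rpow_pos_of_pos hB t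
  have hSt : 0 < S ^ t := rpow_pos_of_pos hS t
  have hM : 0 ≤ S ^ t * d := mul_nonneg hSt.le hd0
  have hpM : S ^ t * d ≤ p * (S ^ t * d) := le_mul_of_one_le_left hM hp.le
  rcases le_or_gt 2 p with hp2 | hp2
  · -- case p ≥ 2, t ≥ 0
    have ht0 : 0 ≤ t := by rw [ht]; linarith
    have hterm1 : A ^ t ≤ S ^ t := rpow_le_rpow hA.le hAS ht0
    have hterm1d : A ^ t * d ≤ S ^ t * d := mul_le_mul_of_nonneg_right hterm1 hd0
    have hBtAt : B ^ t ≤ A ^ t := rpow_le_rpow hB.le hBA ht0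
    have habs : |A ^ t - B ^ t| = A ^ t - B ^ t := abs_of_nonneg (by linarith)
    rcases eq_or_lt_of_le ht0 with h0 | ht0pos
    · rw [habs, ← h0, rpow_zero, rpow_zero, rpow_zero, sub_self, zero_mul]
      have := mul_le_mul_of_nonneg_right (show (1:ℝ) ≤ p+9 by linarith) hd0
      linarith
    · have hAt1 : 0 < A ^ (t-1) := rpow_pos_of_pos hA _
      have hX : 0 ≤ A ^ (t-1) * (A - B) := mul_nonneg hAt1.le (by linarith)
      have key : A ^ t - B ^ t ≤ (1 + t) * (A ^ (t-1) * (A - B)) := by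
        rcases le_or_gt t 1 with ht1 | ht1
        · calc A ^ t - B ^ t ≤ A ^ (t-1) * (A - B) := mub_bern2 hB hBA ht0pos ht1
            _ ≤ (1 + t) * (A ^ (t-1) * (A - B)) := le_mul_of_one_le_left hX (by linarith)
        · calc A ^ t - B ^ t ≤ t * A ^ (t-1) * (A - B) := mub_bern1 hB.le hBA hA ht1.le
            _ = t * (A ^ (t-1) * (A - B)) := by ring
            _ ≤ (1 + t) * (A ^ (t-1) * (A - B)) :=
                mul_le_mul_of_nonneg_right (by linarith) hX
      have h7 : A ^ (t-1) * A = A ^ t := by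
        rw [rpow_sub_one hA.ne', div_mul_cancel₀ _ hA.ne']
      have s2 : (A - B) * y ≤ 2 * A * d := by
        rw [hAdef, hBdef]
        have := mub_q1 hy hyx hd0 hd (μ := μ)
        linarith
      have hterm2 : (A ^ t - B ^ t) * y ≤ p * (A ^ t * d) := by
        calc (A ^ t - B ^ t) * y ≤ ((1 + t) * (A ^ (t-1) * (A - B))) * y :=
              mul_le_mul_of_nonneg_right key hy
          _ = (1 + t) * A ^ (t-1) * ((A - B) * y) := by ring
          _ ≤ (1 + t) * A ^ (t-1) * (2 * A * d) := by
              apply mul_le_mul_of_nonneg_left s2; positivity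
          _ = 2 * (1 + t) * (A ^ (t-1) * A) * d := by ring
          _ = 2 * (1 + t) * A ^ t * d := by rw [h7]
          _ = p * (A ^ t * d) := by rw [ht]; ring
      have hp2' : p * (A ^ t * d) ≤ p * (S ^ t * d) :=
        mul_le_mul_of_nonneg_left hterm1d (by linarith)
      rw [habs]
      linarith
  · -- case 1 < p < 2, -1/2 < t < 0
    have ht0 : t < 0 := by rw [ht]; linarith
    have htm : -(1/2) < t := by rw [ht]; linarith
    have hterm1 : A ^ t ≤ 2 * S ^ t := by
      have h1 : (2*A) ^ t ≤ S ^ t := rpow_le_rpow_of_nonpos hS hS2A ht0.le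
      have h2 : (2*A) ^ t = 2 ^ t * A ^ t := mul_rpow (by norm_num) hA.le
      have h3 : (1/2 : ℝ) ≤ 2 ^ t := by
        have := rpow_le_rpow_of_exponent_le (one_le_two (α := ℝ)) (by linarith : (-1:ℝ) ≤ t)
        rw [rpow_neg_one] at this
        linarith [this]
      have h4 := mul_le_mul_of_nonneg_right h3 hAt.le
      rw [h2] at h1
      linarith
    have hterm1d : A ^ t * d ≤ 2 * (S ^ t * d) := by
      have := mul_le_mul_of_nonneg_right hterm1 hd0
      linarith
    have hAtBt : A ^ t ≤ B ^ t := rpow_le_rpow_of_nonpos hB hBA ht0.le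
    have habs : |A ^ t - B ^ t| = B ^ t - A ^ t := by
      rw [abs_sub_comm]; exact abs_of_nonneg (by linarith)
    rw [habs]
    rcases le_or_gt A (4*B) with h4B | h4B
    · -- comparable case
      have key := mub_bern3 hB hBA (by linarith) ht0
      have hBt1 : 0 < B ^ (t-1) := rpow_pos_of_pos hB _
      have h6 : B ^ (t-1) * B = B ^ t := by
        rw [rpow_sub_one hB.ne', div_mul_cancel₀ _ hB.ne']
      have s2 : (A - B) * y ≤ 3 * B * d := by
        rw [hAdef, hBdef]
        rw [hAdef, hBdef] at h4B
        have := mub_q2 hy hyx hd0 hd h4B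
        linarith
      have hterm2 : (B ^ t - A ^ t) * y ≤ (3/2) * (B ^ t * d) := by
        have hX : 0 ≤ B ^ (t-1) * (A - B) := mul_nonneg hBt1.le (by linarith)
        have key' : B ^ t - A ^ t ≤ (1/2) * (B ^ (t-1) * (A - B)) := by
          calc B ^ t - A ^ t ≤ (-t) * B ^ (t-1) * (A - B) := key
            _ = (-t) * (B ^ (t-1) * (A - B)) := by ring
            _ ≤ (1/2) * (B ^ (t-1) * (A - B)) :=
                mul_le_mul_of_nonneg_right (by linarith) hX
        calc (B ^ t - A ^ t) * y ≤ ((1/2) * (B ^ (t-1) * (A - B))) * y :=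
              mul_le_mul_of_nonneg_right key' hy
          _ = (1/2) * B ^ (t-1) * ((A - B) * y) := by ring
          _ ≤ (1/2) * B ^ (t-1) * (3 * B * d) := by
              apply mul_le_mul_of_nonneg_left s2; positivity
          _ = (3/2) * (B ^ (t-1) * B) * d := by ring
          _ = (3/2) * (B ^ t * d) := by rw [h6]; ring
      have hBt5 : B ^ t ≤ 5 * S ^ t := by
        have hS5B : S ≤ 5*B := by
          rw [hSdef, hBdef]
          rw [hAdef, hBdef] at h4B
          nlinarith
        have h1 : (5*B) ^ t ≤ S ^ t := rpow_le_rpow_of_nonpos hS hS5B ht0.le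
        have h2 : (5*B) ^ t = 5 ^ t * B ^ t := mul_rpow (by norm_num) hB.le
        have h3 : (1/5 : ℝ) ≤ 5 ^ t := by
          have := rpow_le_rpow_of_exponent_le (by norm_num : (1:ℝ) ≤ 5) (by linarith : (-1:ℝ) ≤ t)
          rw [rpow_neg_one] at this
          norm_num at this
          linarith
        have h4 := mul_le_mul_of_nonneg_right h3 hBt.le
        rw [h2] at h1
        linarith
      have hBt5d : B ^ t * d ≤ 5 * (S ^ t * d) := by
        have := mul_le_mul_of_nonneg_right hBt5 hd0
        linarith
      linarith
    · -- degenerate case A > 4B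
      set c := B ^ ((1:ℝ)/2) with hcdef
      have hc : 0 < c := rpow_pos_of_pos hB _
      have hc2 : c^2 = B := by
        rw [hcdef, sq, ← rpow_add hB]
        norm_num
      obtain ⟨hyc, hcd, hd2⟩ := mub_q4 (μ := μ) hy hyx hd0 hd hc
        (by rw [hc2, hBdef]) (by rw [← hBdef, ← hAdef]; linarith)
      rw [← hSdef] at hd2
      have hdpos : 0 < d := by linarith
      have k1 : (B ^ t - A ^ t) * y ≤ B ^ t * c := by
        calc (B ^ t - A ^ t) * y ≤ B ^ t * y :=
              mul_le_mul_of_nonneg_right (by linarith) hy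
          _ ≤ B ^ t * c := mul_le_mul_of_nonneg_left hyc hBt.le
      have k2 : B ^ t * c = c ^ (2*t+1) := by
        have hBtc : B ^ t = c ^ (2*t) := by
          rw [hcdef, ← rpow_mul hB.le]
          congr 1
          ring
        rw [hBtc, rpow_add_one hc.ne']
      have k3 : c ^ (2*t+1) ≤ (2*d) ^ (2*t+1) :=
        rpow_le_rpow hc.le hcd (by rw [ht]; linarith)
      have k4 : (2*d) ^ (2*t+1) = (4*d^2) ^ t * (2*d) := by
        rw [rpow_add_one (by positivity : (2*d) ≠ 0)]
        congr 1
        rw [show (4*d^2 : ℝ) = (2*d)^2 by ring, ← rpow_two,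
          ← rpow_mul (by positivity : (0:ℝ) ≤ 2*d)]
      have k5 : (4*d^2) ^ t ≤ 2 * S ^ t := by
        have h1 : (4*d^2) ^ t ≤ (S/4) ^ t :=
          rpow_le_rpow_of_nonpos (by positivity) (by linarith) ht0.le
        have h2 : (S/4) ^ t = S ^ t / 4 ^ t := div_rpow hS.le (by norm_num) t
        have h3 : (1/2 : ℝ) ≤ 4 ^ t := by
          have h4 : (4:ℝ) ^ (-(1/2):ℝ) ≤ 4 ^ t := rpow_le_rpow_of_exponent_le (by norm_num) (by linarith)
          have h5 : (4:ℝ) ^ (-(1/2):ℝ) = 1/2 := by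
            rw [show (4:ℝ) = 2^2 by norm_num, ← rpow_two,
              ← rpow_mul (by norm_num : (0:ℝ) ≤ 2)]
            norm_num [rpow_neg_one]
          linarith
        have h6 : 0 < (4:ℝ) ^ t := rpow_pos_of_pos (by norm_num) t
        rw [h2] at h1
        have h7 : S ^ t / 4 ^ t ≤ 2 * S ^ t := by
          rw [div_le_iff₀ h6]
          have h8 := mul_le_mul_of_nonneg_right h3 (by positivity : (0:ℝ) ≤ 2 * S ^ t)
          linarith
        linarith
      have hterm2 : (B ^ t - A ^ t) * y ≤ 4 * (S ^ t * d) := by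
        calc (B ^ t - A ^ t) * y ≤ B ^ t * c := k1
          _ = c ^ (2*t+1) := k2
          _ ≤ (2*d) ^ (2*t+1) := k3
          _ = (4*d^2) ^ t * (2*d) := k4
          _ ≤ (2 * S ^ t) * (2*d) :=
              mul_le_mul_of_nonneg_right k5 (by linarith)
          _ = 4 * (S ^ t * d) := by ring
      linarith

lemma mub_key {p : ℝ} (hp : 1 < p) {k : ℕ} {μ : ℝ} (hμ : 0 < μ)
    (ξ ξ' : EuclideanSpace ℝ (Fin k)) (hle : ‖ξ'‖ ≤ ‖ξ‖) :
    ‖(μ ^ 2 + ‖ξ‖ ^ 2) ^ ((p - 2) / 2) • ξ - (μ ^ 2 + ‖ξ'‖ ^ 2) ^ ((p - 2) / 2) • ξ'‖ ≤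
      (p + 9) * (μ ^ 2 + ‖ξ‖ ^ 2 + ‖ξ'‖ ^ 2) ^ ((p - 2) / 2) * ‖ξ - ξ'‖ := by
  set t := (p-2)/2 with ht
  have hA : 0 < μ^2+‖ξ‖^2 := by positivity
  have hid : (μ^2+‖ξ‖^2)^t • ξ - (μ^2+‖ξ'‖^2)^t • ξ' =
      (μ^2+‖ξ‖^2)^t • (ξ - ξ') + ((μ^2+‖ξ‖^2)^t - (μ^2+‖ξ'‖^2)^t) • ξ' := by
    module
  calc ‖(μ^2+‖ξ‖^2)^t • ξ - (μ^2+‖ξ'‖^2)^t • ξ'‖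
      = ‖(μ^2+‖ξ‖^2)^t • (ξ - ξ') + ((μ^2+‖ξ‖^2)^t - (μ^2+‖ξ'‖^2)^t) • ξ'‖ := by rw [hid]
    _ ≤ ‖(μ^2+‖ξ‖^2)^t • (ξ - ξ')‖ + ‖((μ^2+‖ξ‖^2)^t - (μ^2+‖ξ'‖^2)^t) • ξ'‖ :=
        norm_add_le _ _
    _ = (μ^2+‖ξ‖^2)^t * ‖ξ - ξ'‖ + |(μ^2+‖ξ‖^2)^t - (μ^2+‖ξ'‖^2)^t| * ‖ξ'‖ := by
        rw [norm_smul, norm_smul, Real.norm_eq_abs, Real.norm_eq_abs,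
          abs_of_pos (Real.rpow_pos_of_pos hA t)]
    _ ≤ (p + 9) * (μ^2+‖ξ‖^2+‖ξ'‖^2)^t * ‖ξ - ξ'‖ :=
        mub_scalar hp hμ (norm_nonneg ξ') hle (norm_nonneg _) (norm_sub_norm_le ξ ξ')

/-- For `p > 1` there is `γ = γ(p) > 0` such that for every dimension `k`, every
`μ ∈ (0,1]` and all `ξ, ξ̃ ∈ ℝᵏ`:
`|(μ²+|ξ|²)^((p-2)/2) ξ − (μ²+|ξ̃|²)^((p-2)/2) ξ̃| ≤ γ (μ²+|ξ|²+|ξ̃|²)^((p-2)/2) |ξ−ξ̃|`. -/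
theorem monotonicity_upper_bound (p : ℝ) (hp : 1 < p) :
    ∃ γ : ℝ, 0 < γ ∧
      ∀ (k : ℕ) (μ : ℝ), μ ∈ Set.Ioc (0 : ℝ) 1 →
        ∀ ξ ξ' : EuclideanSpace ℝ (Fin k),
          ‖(μ ^ 2 + ‖ξ‖ ^ 2) ^ ((p - 2) / 2) • ξ - (μ ^ 2 + ‖ξ'‖ ^ 2) ^ ((p - 2) / 2) • ξ'‖ ≤
            γ * (μ ^ 2 + ‖ξ‖ ^ 2 + ‖ξ'‖ ^ 2) ^ ((p - 2) / 2) * ‖ξ - ξ'‖ := by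
  refine ⟨p + 9, by linarith, ?_⟩
  intro k μ hμ ξ ξ'
  rcases le_total ‖ξ'‖ ‖ξ‖ with hle | hle
  · exact mub_key hp hμ.1 ξ ξ' hle
  · calc ‖(μ^2+‖ξ‖^2) ^ ((p-2)/2) • ξ - (μ^2+‖ξ'‖^2) ^ ((p-2)/2) • ξ'‖
        = ‖(μ^2+‖ξ'‖^2) ^ ((p-2)/2) • ξ' - (μ^2+‖ξ‖^2) ^ ((p-2)/2) • ξ‖ := norm_sub_rev _ _
      _ ≤ (p + 9) * (μ^2+‖ξ'‖^2+‖ξ‖^2) ^ ((p-2)/2) * ‖ξ' - ξ‖ := mub_key hp hμ.1 ξ' ξ hle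
      _ = (p + 9) * (μ^2+‖ξ‖^2+‖ξ'‖^2) ^ ((p-2)/2) * ‖ξ - ξ'‖ := by
          rw [norm_sub_rev, show μ^2+‖ξ'‖^2+‖ξ‖^2 = μ^2+‖ξ‖^2+‖ξ'‖^2 by ring]
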